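/- For every polynomial p ∈ ℂ[X], the commutator of p(a) with the creation operator equals the formal derivative of p evaluated at a: as linear endomorphisms of the space of sequences ℕ → ℂ, p(a) ∘ a† − a† ∘ p(a) = p'(a), where p' denotes the formal derivative of p. -/
import Mathlib


/-- The annihilation operator `(a x)ₙ = √(n+1)·x_{n+1}`. -/
noncomputable def ann : Module.End ℂ (ℕ → ℂ) :=
  { toFun := fun x n => (Real.sqrt (n + 1) : ℂ) * x (n + 1)
    map_add' := by intro x y; funext n; simp [mul_add]
    map_smul' := by intro c x; funext n; simp [smul_eq_mul]; ring }

/-- The creation operator `(a† x)₀ = 0`, `(a† x)ₙ = √n·x_{n−1}` for `n ≥ 1`. -/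
noncomputable def cre : Module.End ℂ (ℕ → ℂ) :=
  { toFun := fun x n => match n with
      | 0 => 0
      | Nat.succ m => (Real.sqrt (m + 1) : ℂ) * x m
    map_add' := by intro x y; funext n; cases n <;> simp [mul_add]
    map_smul' := by intro c x; funext n; cases n <;> (simp [smul_eq_mul]; try ring) }

/-- Canonical commutation relation `[a, a†] = 1`. -/
lemma ccr : ann * cre - cre * ann = 1 := by
  ext x n
  cases n with
  | zero => simp [ann, cre, Module.End.mul_apply]
  | succ m =>
      simp only [ann, cre, Module.End.mul_apply, LinearMap.sub_apply, LinearMap.coe_mk,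
        AddHom.coe_mk, Pi.sub_apply, Module.End.one_apply]
      have h1 : ((Real.sqrt (m + 1 + 1) : ℝ) : ℂ) * ((Real.sqrt (m + 1 + 1) : ℝ) : ℂ)
          = (m : ℂ) + 2 := by
        rw [← Complex.ofReal_mul, Real.mul_self_sqrt (by positivity)]; push_cast; ring
      have h2 : ((Real.sqrt (m + 1) : ℝ) : ℂ) * ((Real.sqrt (m + 1) : ℝ) : ℂ)
          = (m : ℂ) + 1 := by
        rw [← Complex.ofReal_mul, Real.mul_self_sqrt (by positivity)]; push_cast; ring
      push_cast
      linear_combination x (m + 1) * h1 - x (m + 1) * h2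

/-- `[aⁿ⁺¹, a†] = (n+1) aⁿ`. -/
lemma pow_comm (n : ℕ) :
    ann ^ (n + 1) * cre - cre * ann ^ (n + 1) = (n + 1 : ℂ) • ann ^ n := by
  induction n with
  | zero => simpa using ccr
  | succ k ih =>
      have h : ann ^ (k + 2) * cre - cre * ann ^ (k + 2)
          = ann * (ann ^ (k + 1) * cre - cre * ann ^ (k + 1))
            + (ann * cre - cre * ann) * ann ^ (k + 1) := by
        simp only [pow_succ', mul_sub, sub_mul, mul_assoc]; abel
      rw [h, ih, ccr, mul_smul_comm, one_mul, ← pow_succ']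
      push_cast
      module

/-- The commutator of `p(a)` with the creation operator equals the formal
derivative of `p` evaluated at `a`: `p(a) ∘ a† − a† ∘ p(a) = p'(a)`. -/
theorem commutator_polynomial_cre (p : Polynomial ℂ) :
    Polynomial.aeval ann p * cre - cre * Polynomial.aeval ann p
      = Polynomial.aeval ann (Polynomial.derivative p) := by
  induction p using Polynomial.induction_on' with
  | add p q hp hq =>
      simp only [map_add, add_mul, mul_add, ← hp, ← hq]
      abel
  | monomial n c =>
      cases n with
      | zero =>
          simp [Polynomial.aeval_monomial, Algebra.algebraMap_eq_smul_one,
            smul_mul_assoc, mul_smul_comm]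
      | succ m =>
          rw [Polynomial.derivative_monomial]
          simp only [Polynomial.aeval_monomial, Algebra.algebraMap_eq_smul_one,
            smul_mul_assoc, one_mul, mul_one, mul_smul_comm, Nat.add_sub_cancel]
          rw [← smul_sub, pow_comm, smul_smul]
          push_cast
          ring_nf
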